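/- In the grammar of the previous statement, for a word w over the alphabet {a_1^{±1},...,a_n^{±1}} and i ∈ {1,...,n}: A_i derives w if and only if (1) w evaluates to a_i in F_n, and (2) no proper nonempty initial segment of w evaluates to a_i in F_n. -/

import Mathlib

open ContextFreeGrammar

instance {T N : Type} [DecidableEq T] [DecidableEq N] :
    DecidableEq (ContextFreeRule T N) := fun a b =>
  decidable_of_iff (a.input = b.input ∧ a.output = b.output)
    (by cases a; cases b; simp)

/-- The formal inverse of a letter: `(i, b)` stands for `aᵢ` if `b = true` and for
`aᵢ⁻¹` if `b = false`. -/
def letterInv {n : ℕ} (c : Fin n × Bool) : Fin n × Bool := (c.1, !c.2)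

/-- Nonterminals: `none` is the initial symbol `S`; `some t` is the nonterminal `N_t`
(`A_i` when `t = aᵢ`, `Ā_i` when `t = aᵢ⁻¹`) that derives exactly the words evaluating
to the letter `t` with no proper initial segment evaluating to `t`. -/
abbrev TrivNT (n : ℕ) : Type := Option (Fin n × Bool)

/-- The production rules `S → ε`, `S → c N_{c⁻¹} S` (for every letter `c`),
`N_t → t`, and `N_t → c N_{c⁻¹} N_t` (for every letter `c ≠ t`); this is exactly the
grammar `S → ε | a_j Ā_j S | ā_j A_j S`, `A_i → a_i | ā_i A_i A_i | a_j Ā_j A_i (j ≠ i)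
| ā_j A_j A_i`, `Ā_i → ā_i | a_i Ā_i Ā_i | a_j Ā_j Ā_i | ā_j A_j Ā_i (j ≠ i)`. -/
noncomputable def trivRules (n : ℕ) : List (ContextFreeRule (Fin n × Bool) (TrivNT n)) :=
  [(⟨none, []⟩ : ContextFreeRule (Fin n × Bool) (TrivNT n))] ++
    ((Finset.univ : Finset (Fin n × Bool)).toList.map fun c =>
      ⟨none, [Symbol.terminal c, Symbol.nonterminal (some (letterInv c)),
        Symbol.nonterminal none]⟩) ++
    ((Finset.univ : Finset (Fin n × Bool)).toList.map fun t =>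
      ⟨some t, [Symbol.terminal t]⟩) ++
    (((Finset.univ : Finset ((Fin n × Bool) × (Fin n × Bool)))).toList.filterMap
      fun tc =>
        if tc.2 = tc.1 then none else
          some ⟨some tc.1, [Symbol.terminal tc.2,
            Symbol.nonterminal (some (letterInv tc.2)), Symbol.nonterminal (some tc.1)]⟩)

/-- The grammar of the paper for the language of all words representing `1 ∈ Fₙ`. -/
noncomputable def trivGrammar (n : ℕ) : ContextFreeGrammar (Fin n × Bool) :=
  ⟨TrivNT n, none, (trivRules n).toFinset⟩


section FG

variable {α : Type} [DecidableEq α]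

/-- The no-cancellation condition on adjacent letters. -/
def NC : (α × Bool) → (α × Bool) → Prop := fun a b => ¬(b.1 = a.1 ∧ b.2 = !a.2)

lemma nc_of {a b : α × Bool} (h : ¬(a.1 = b.1 ∧ a.2 = !b.2)) : NC a b := by
  rintro ⟨h1, h2⟩
  exact h ⟨h1.symm, by rcases a with ⟨a, c⟩; rcases b with ⟨b, d⟩; cases c <;> cases d <;> simp_all⟩

lemma chain'_reduce (L : List (α × Bool)) : List.Chain' NC (FreeGroup.reduce L) := by
  induction L with
  | nil => exact List.isChain_nil
  | cons x L ih =>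
    rw [FreeGroup.reduce.cons]
    rcases h : FreeGroup.reduce L with _ | ⟨hd, tl⟩
    · exact List.isChain_singleton _
    · rw [h] at ih
      dsimp only
      by_cases hc : x.1 = hd.1 ∧ x.2 = !hd.2
      · rw [if_pos hc]; exact ih.tail
      · rw [if_neg hc]
        exact List.isChain_cons_cons.mpr ⟨nc_of hc, ih⟩

lemma reduce_eq_self_of_chain' {L : List (α × Bool)} (h : List.Chain' NC L) :
    FreeGroup.reduce L = L := by
  induction L with
  | nil => simp
  | cons x L ih =>
    rw [FreeGroup.reduce.cons, ih h.tail]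
    cases L with
    | nil => rfl
    | cons hd tl =>
      have hnc := List.isChain_cons_cons.mp h |>.1
      dsimp only
      rw [if_neg]
      rintro ⟨h1, h2⟩
      exact hnc ⟨h1.symm, by rcases x with ⟨a,b⟩; rcases hd with ⟨c,d⟩; cases b <;> cases d <;> simp_all⟩

lemma toWord_mk_of_prefix {L M : List (α × Bool)} (h : L <+: FreeGroup.reduce M) :
    (FreeGroup.mk L).toWord = L := by
  rw [FreeGroup.toWord_mk]
  exact reduce_eq_self_of_chain' ((chain'_reduce M).prefix h)

lemma prefix_append_cases {u v w : List α} (h : u <+: v ++ w) :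
    u <+: v ∨ ∃ u', u = v ++ u' ∧ u' <+: w := by
  obtain ⟨rest, hr⟩ := h
  rcases List.append_eq_append_iff.mp hr with ⟨a', h1, h2⟩ | ⟨c', h1, h2⟩
  · exact Or.inl ⟨a', h1.symm⟩
  · exact Or.inr ⟨c', h1, ⟨rest, h2.symm⟩⟩

lemma mk_cons_cancel (x : α × Bool) (L : List (α × Bool)) :
    FreeGroup.mk (x :: (x.1, !x.2) :: L) = FreeGroup.mk L := by
  apply FreeGroup.reduce.exact
  apply FreeGroup.reduce.Step.eq
  exact FreeGroup.Red.Step.not (L₁ := []) (L₂ := L) (x := x.1) (b := x.2)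

/-- The tree lemma: if the reduced word of `g` is a prefix of the reduced word of `mk z`
(i.e. `g` lies on the geodesic from `1` to `mk z`), then some prefix of `z` evaluates to `g`. -/
lemma geodesic_prefix : ∀ (z : List (α × Bool)) (g : FreeGroup α),
    g.toWord <+: (FreeGroup.mk z).toWord → ∃ p, p <+: z ∧ FreeGroup.mk p = g := by
  intro z
  induction z with
  | nil =>
    intro g hg
    rw [FreeGroup.toWord_mk, FreeGroup.reduce_nil, List.prefix_nil,
      FreeGroup.toWord_eq_nil_iff] at hg
    exact ⟨[], List.prefix_refl _, by rw [hg]; rfl⟩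
  | cons x z' ih =>
    intro g hg
    rw [FreeGroup.toWord_mk, FreeGroup.reduce.cons] at hg
    rcases h : FreeGroup.reduce z' with _ | ⟨hd, tl⟩
    · rw [h] at hg
      dsimp only at hg
      rcases List.prefix_cons_iff.mp hg with h0 | ⟨t, ht, ht'⟩
      · exact ⟨[], ⟨x :: z', rfl⟩, by
          rw [← h0, FreeGroup.mk_toWord]⟩
      · rw [List.prefix_nil] at ht'
        subst ht'
        refine ⟨[x], ⟨z', rfl⟩, ?_⟩
        rw [← FreeGroup.mk_toWord (x := g), ht]
    · rw [h] at hg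
      dsimp only at hg
      by_cases hc : x.1 = hd.1 ∧ x.2 = !hd.2
      · rw [if_pos hc] at hg
        have hhd : hd = (x.1, !x.2) := by
          rcases hd with ⟨a, b⟩; rcases hc with ⟨h1, h2⟩
          simp only at h1 h2
          subst h1; rw [h2]; simp
        have hpre : (hd :: g.toWord) <+: FreeGroup.reduce z' := by
          rw [h]; exact List.cons_prefix_cons.mpr ⟨rfl, hg⟩
        have htw : (FreeGroup.mk (hd :: g.toWord)).toWord = hd :: g.toWord :=
          toWord_mk_of_prefix hpre
        obtain ⟨p', hp', hmk⟩ := ih (FreeGroup.mk (hd :: g.toWord))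
          (by rw [htw, FreeGroup.toWord_mk]; exact hpre)
        refine ⟨x :: p', List.cons_prefix_cons.mpr ⟨rfl, hp'⟩, ?_⟩
        have : FreeGroup.mk (x :: p') = FreeGroup.mk ([x] ++ p') := rfl
        rw [this, ← FreeGroup.mul_mk, hmk]
        have : FreeGroup.mk [x] * FreeGroup.mk (hd :: g.toWord)
            = FreeGroup.mk (x :: hd :: g.toWord) := FreeGroup.mul_mk
        rw [this, hhd, mk_cons_cancel, FreeGroup.mk_toWord]
      · rw [if_neg hc] at hg
        rcases List.prefix_cons_iff.mp hg with h0 | ⟨t, ht, ht'⟩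
        · exact ⟨[], ⟨x :: z', rfl⟩, by
            rw [← h0, FreeGroup.mk_toWord]⟩
        · have htpre : t <+: FreeGroup.reduce z' := by rw [h]; exact ht'
          have htw : (FreeGroup.mk t).toWord = t := toWord_mk_of_prefix htpre
          obtain ⟨p', hp', hmk⟩ := ih (FreeGroup.mk t)
            (by rw [htw, FreeGroup.toWord_mk]; exact htpre)
          refine ⟨x :: p', List.cons_prefix_cons.mpr ⟨rfl, hp'⟩, ?_⟩
          have h1 : FreeGroup.mk (x :: p') = FreeGroup.mk [x] * FreeGroup.mk p' :=
            (FreeGroup.mul_mk (L₁ := [x]) (L₂ := p')).symm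
          rw [h1, hmk, FreeGroup.mul_mk]
          show FreeGroup.mk (x :: t) = g
          rw [← ht, FreeGroup.mk_toWord]



end FG

section CFG

variable {T : Type} {g : ContextFreeGrammar T}

lemma terminal_stuck {x : List T} {s : List (Symbol T g.NT)}
    (h : g.Derives (x.map Symbol.terminal) s) : s = x.map Symbol.terminal := by
  rcases h.eq_or_head with rfl | ⟨v, hp, _⟩
  · rfl
  · exfalso
    obtain ⟨r, _, hr⟩ := hp
    obtain ⟨p, q, hpq, -⟩ := hr.exists_parts
    have : Symbol.nonterminal r.input ∈ x.map Symbol.terminal := by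
      rw [hpq]; simp
    simp at this

lemma derives_append_split : ∀ {w s : List (Symbol T g.NT)}, g.Derives w s →
    ∀ u v, w = u ++ v → ∃ s1 s2, s = s1 ++ s2 ∧ g.Derives u s1 ∧ g.Derives v s2 := by
  intro w s h
  induction h using Relation.ReflTransGen.head_induction_on with
  | refl =>
    rintro u v rfl
    exact ⟨u, v, rfl, Derives.refl u, Derives.refl v⟩
  | @head a c hac hcb ih =>
    rintro u v rfl
    obtain ⟨r, hrmem, hr⟩ := hac
    obtain ⟨p, q, hpq, hc⟩ := hr.exists_parts
    rw [List.append_assoc] at hpq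
    rcases List.append_eq_append_iff.mp hpq with ⟨a', hu, hq⟩ | ⟨c', hp, hv⟩
    · -- p = u ++ a', v = a' ++ [nt] ++ q : rewrite in v
      have hprod : g.Produces v (a' ++ r.output ++ q) := by
        refine ⟨r, hrmem, ?_⟩
        rw [hq, ← List.append_assoc]
        exact r.rewrites_of_exists_parts a' q
      obtain ⟨s1, s2, hs, hd1, hd2⟩ := ih u (a' ++ r.output ++ q)
        (by rw [hc, hu]; simp [List.append_assoc])
      exact ⟨s1, s2, hs, hd1, hprod.trans_derives hd2⟩
    · cases c' with
      | nil =>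
        rw [List.append_nil] at hp
        rw [List.nil_append] at hv
        have hprod : g.Produces v (r.output ++ q) := by
          refine ⟨r, hrmem, ?_⟩
          rw [← hv]
          simpa using r.rewrites_of_exists_parts [] q
        obtain ⟨s1, s2, hs, hd1, hd2⟩ := ih u (r.output ++ q)
          (by rw [hc, hp]; simp [List.append_assoc])
        exact ⟨s1, s2, hs, hd1, hprod.trans_derives hd2⟩
      | cons b c'' =>
        rw [List.cons_append] at hv
        obtain ⟨hb, hq2⟩ := List.cons_eq_cons.mp hv
        have hprod : g.Produces u (p ++ r.output ++ c'') := by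
          refine ⟨r, hrmem, ?_⟩
          rw [hp, ← hb]
          simpa using r.rewrites_of_exists_parts p c''
        simp only [List.nil_append, List.append_eq] at hq2
        obtain ⟨s1, s2, hs, hd1, hd2⟩ := ih (p ++ r.output ++ c'') v
          (by rw [hc, hq2]; simp [List.append_assoc])
        exact ⟨s1, s2, hs, hprod.trans_derives hd1, hd2⟩

lemma derives_singleton_nt_cases {A : g.NT} {s : List (Symbol T g.NT)}
    (h : g.Derives [Symbol.nonterminal A] s) :
    s = [Symbol.nonterminal A] ∨
      ∃ r ∈ g.rules, r.input = A ∧ g.Derives r.output s := by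
  rcases h.eq_or_head with rfl | ⟨v, hp, hd⟩
  · exact Or.inl rfl
  · obtain ⟨r, hrmem, hr⟩ := hp
    obtain ⟨p, q, hpq, hv⟩ := hr.exists_parts
    cases p with
    | cons b p' =>
      exfalso
      have := congrArg List.length hpq
      simp at this
    | nil =>
      simp only [List.nil_append] at hpq hv
      cases q with
      | cons b q' =>
        exfalso
        have := congrArg List.length hpq
        simp at this
      | nil =>
        simp only [List.append_nil] at hpq hv
        have hA : r.input = A := by
          have := List.cons_eq_cons.mp hpq
          injection this.1.symm
        subst hv
        exact Or.inr ⟨r, hrmem, hA, hd⟩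


end CFG

section Grammar

lemma mem_trivRules_iff {n : ℕ} (r : ContextFreeRule (Fin n × Bool) (TrivNT n)) :
    r ∈ trivRules n ↔ r = ⟨none, []⟩ ∨
      (∃ c, r = ⟨none, [Symbol.terminal c, Symbol.nonterminal (some (letterInv c)),
        Symbol.nonterminal none]⟩) ∨
      (∃ t, r = ⟨some t, [Symbol.terminal t]⟩) ∨
      (∃ t c, c ≠ t ∧ r = ⟨some t, [Symbol.terminal c,
        Symbol.nonterminal (some (letterInv c)), Symbol.nonterminal (some t)]⟩) := by
  constructor
  · intro h
    simp only [trivRules, List.mem_append, List.mem_map, List.mem_filterMap, Finset.mem_toList,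
      Finset.mem_univ, true_and, List.mem_singleton] at h
    rcases h with ((h | ⟨a, ha⟩) | ⟨a, ha⟩) | ⟨a, ha⟩
    · exact Or.inl h
    · exact Or.inr (Or.inl ⟨a, ha.symm⟩)
    · exact Or.inr (Or.inr (Or.inl ⟨a, ha.symm⟩))
    · rcases a with ⟨t, c⟩
      by_cases hct : c = t
      · simp [hct] at ha
      · rw [if_neg hct] at ha
        exact Or.inr (Or.inr (Or.inr ⟨t, c, hct, (Option.some_injective _ ha).symm⟩))
  · intro h
    simp only [trivRules, List.mem_append, List.mem_map, List.mem_filterMap, Finset.mem_toList,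
      Finset.mem_univ, true_and, List.mem_singleton]
    rcases h with h | ⟨c, hc⟩ | ⟨t, ht⟩ | ⟨t, c, hct, hr⟩
    · exact Or.inl (Or.inl (Or.inl h))
    · exact Or.inl (Or.inl (Or.inr ⟨c, hc.symm⟩))
    · exact Or.inl (Or.inr ⟨t, ht.symm⟩)
    · exact Or.inr ⟨(t, c), by rw [if_neg hct, hr]⟩

lemma mem_trivGrammar_rules {n : ℕ} (r : ContextFreeRule (Fin n × Bool) (TrivNT n)) :
    r ∈ (trivGrammar n).rules ↔ r ∈ trivRules n := by
  exact List.mem_toFinset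

lemma mk_single_ne_one {n : ℕ} (t : Fin n × Bool) : FreeGroup.mk [t] ≠ 1 := by
  intro h
  have := congrArg FreeGroup.toWord h
  rw [FreeGroup.toWord_mk, FreeGroup.reduce_singleton, FreeGroup.toWord_one] at this
  simp at this

lemma mk_single_inj {n : ℕ} {c t : Fin n × Bool} (h : FreeGroup.mk [c] = FreeGroup.mk [t]) :
    c = t := by
  have := congrArg FreeGroup.toWord h
  rw [FreeGroup.toWord_mk, FreeGroup.toWord_mk, FreeGroup.reduce_singleton,
    FreeGroup.reduce_singleton] at this
  simpa using this

lemma letterInv_letterInv {n : ℕ} (c : Fin n × Bool) : letterInv (letterInv c) = c := by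
  simp [letterInv]

lemma mk_mul_letterInv {n : ℕ} (c : Fin n × Bool) :
    FreeGroup.mk [c] * FreeGroup.mk [letterInv c] = 1 := by
  rw [FreeGroup.mul_mk]
  show FreeGroup.mk (c :: (c.1, !c.2) :: []) = 1
  rw [mk_cons_cancel]
  rfl

lemma mk_letterInv_eq_inv {n : ℕ} (c : Fin n × Bool) :
    FreeGroup.mk [letterInv c] = (FreeGroup.mk [c])⁻¹ :=
  (inv_eq_of_mul_eq_one_right (mk_mul_letterInv c)).symm

/-- Lemma L: any word evaluating to `c⁻¹ t` with `c ≠ t` has a proper prefix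
evaluating to `c⁻¹`. -/
lemma cross {n : ℕ} {c t : Fin n × Bool} (hct : c ≠ t) {q : List (Fin n × Bool)}
    (hq : FreeGroup.mk q = FreeGroup.mk [letterInv c] * FreeGroup.mk [t]) :
    ∃ r, r <+: q ∧ r ≠ q ∧ FreeGroup.mk r = FreeGroup.mk [letterInv c] := by
  have hred : FreeGroup.reduce [letterInv c, t] = [letterInv c, t] := by
    apply reduce_eq_self_of_chain'
    refine List.isChain_cons_cons.mpr ⟨?_, List.isChain_singleton _⟩
    rintro ⟨h1, h2⟩
    simp only [letterInv] at h1 h2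
    rw [Bool.not_not] at h2
    exact hct (Prod.ext h1.symm h2.symm)
  have hq2 : FreeGroup.mk q = FreeGroup.mk [letterInv c, t] := by
    rw [hq, FreeGroup.mul_mk]; rfl
  obtain ⟨r, hr, hmk⟩ := geodesic_prefix q (FreeGroup.mk [letterInv c]) (by
    rw [FreeGroup.toWord_mk, FreeGroup.reduce_singleton, hq2, FreeGroup.toWord_mk, hred]
    exact ⟨[t], rfl⟩)
  refine ⟨r, hr, ?_, hmk⟩
  intro hrq
  rw [hrq, hq] at hmk
  have : FreeGroup.mk [t] = 1 := by
    have := mul_left_cancel (a := FreeGroup.mk [letterInv c])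
      (b := FreeGroup.mk [t]) (c := 1) (by rw [mul_one]; exact hmk)
    exact this
  exact mk_single_ne_one t this

end Grammar


lemma prefix_append_left' {α : Type} (u : List α) {v' v : List α} (h : v' <+: v) :
    u ++ v' <+: u ++ v := by
  obtain ⟨tl, htl⟩ := h
  exact ⟨tl, by rw [List.append_assoc, htl]⟩

lemma key (n : ℕ) : ∀ (N : ℕ) (w : List (Fin n × Bool)), w.length < N →
    ∀ (t : Fin n × Bool),
    ((trivGrammar n).Derives [Symbol.nonterminal (some t)] (w.map Symbol.terminal) ↔
      (FreeGroup.mk w = FreeGroup.mk [t] ∧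
        ∀ w', w' <+: w → w' ≠ [] → w' ≠ w → FreeGroup.mk w' ≠ FreeGroup.mk [t])) := by
  intro N
  induction N with
  | zero => intro w hw; omega
  | succ N ih =>
    intro w hw t
    constructor
    · -- forward direction
      intro h
      rcases derives_singleton_nt_cases h with heq | ⟨r, hrmem, hinput, hder⟩
      · exfalso; cases w <;> simp at heq
      · replace hrmem := (mem_trivRules_iff _).mp ((mem_trivGrammar_rules _).mp hrmem)
        rcases hrmem with rfl | ⟨c, rfl⟩ | ⟨t', rfl⟩ | ⟨t', c, hct, rfl⟩
        · simp at hinput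
        · simp at hinput
        · -- rule N_t → t
          simp only at hinput
          have ht' : t' = t := by injection hinput
          subst ht'
          have hst : w.map Symbol.terminal = [t'].map Symbol.terminal :=
            terminal_stuck (x := [t']) hder
          have hw' : w = [t'] :=
            List.map_injective_iff.mpr (fun a b hab => by injection hab) hst
          subst hw'
          refine ⟨rfl, ?_⟩
          intro w' hp h0 hne
          rcases List.prefix_cons_iff.mp hp with rfl | ⟨t2, rfl, ht2⟩
          · exact absurd rfl h0
          · rw [List.prefix_nil] at ht2
            exact absurd (by rw [ht2]) hne
        · -- rule N_t → c N_{c⁻¹} N_t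
          simp only at hinput
          have ht' : t' = t := by injection hinput
          subst ht'
          obtain ⟨s1, s23, hsplit, hd1, hd23⟩ := derives_append_split hder
            [Symbol.terminal c]
            ([Symbol.nonterminal (some (letterInv c))] ++ [Symbol.nonterminal (some t')]) rfl
          obtain ⟨s2, s3, hsplit2, hd2, hd3⟩ := derives_append_split hd23
            [Symbol.nonterminal (some (letterInv c))] [Symbol.nonterminal (some t')] rfl
          subst hsplit2
          have hs1 : s1 = [c].map Symbol.terminal := terminal_stuck (x := [c]) hd1
          subst hs1
          obtain ⟨w1, rest, hw12, hmw1, hmrest⟩ := List.map_eq_append_iff.mp hsplit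
          obtain ⟨u, v, hrest, hmu, hmv⟩ := List.map_eq_append_iff.mp hmrest
          subst hrest
          have hw1 : w1 = [c] :=
            List.map_injective_iff.mpr (fun a b hab => by injection hab) hmw1
          subst hw1
          subst hw12
          -- lengths
          have hlu : u.length < N := by
            have := congrArg List.length (rfl : ([c] ++ (u ++ v)) = [c] ++ (u ++ v))
            simp only [List.length_append, List.length_cons, List.length_nil] at hw ⊢
            omega
          have hlv : v.length < N := by
            simp only [List.length_append, List.length_cons, List.length_nil] at hw ⊢
            omega
          obtain ⟨hu1, hu2⟩ := (ih u hlu (letterInv c)).mp (by rw [hmu]; exact hd2)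
          obtain ⟨hv1, hv2⟩ := (ih v hlv t').mp (by rw [hmv]; exact hd3)
          constructor
          · rw [← FreeGroup.mul_mk, ← FreeGroup.mul_mk, hu1, hv1, ← mul_assoc,
              mk_mul_letterInv, one_mul]
          · intro w' hp h0 hnw hbad
            have hp' : w' <+: c :: (u ++ v) := hp
            rcases List.prefix_cons_iff.mp hp' with rfl | ⟨w'', rfl, hw''⟩
            · exact absurd rfl h0
            · rcases prefix_append_cases hw'' with hwu | ⟨v', rfl, hv'⟩
              · by_cases hwe : w'' = u
                · subst hwe
                  have h1 : FreeGroup.mk (c :: w'') = 1 := by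
                    have : FreeGroup.mk ([c] ++ w'') = FreeGroup.mk [c] * FreeGroup.mk w'' :=
                      (FreeGroup.mul_mk).symm
                    rw [show (c :: w'' : List (Fin n × Bool)) = [c] ++ w'' from rfl, this,
                      hu1, mk_mul_letterInv]
                  rw [h1] at hbad
                  exact mk_single_ne_one t' hbad.symm
                · have hm : FreeGroup.mk w'' =
                      FreeGroup.mk [letterInv c] * FreeGroup.mk [t'] := by
                    have hcw : FreeGroup.mk [c] * FreeGroup.mk w'' = FreeGroup.mk [t'] := by
                      rw [FreeGroup.mul_mk]; exact hbad
                    rw [mk_letterInv_eq_inv, eq_inv_mul_iff_mul_eq]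
                    exact hcw
                  obtain ⟨rr, hrr, hrrne, hrrmk⟩ := cross hct hm
                  refine hu2 rr (hrr.trans hwu) ?_ ?_ hrrmk
                  · rintro rfl
                    exact mk_single_ne_one (letterInv c) hrrmk.symm
                  · intro hrru
                    subst hrru
                    have h1 : w''.length < rr.length :=
                      lt_of_le_of_ne hwu.length_le (fun hl => hwe (hwu.eq_of_length hl))
                    have h2 : rr.length ≤ w''.length := hrr.length_le
                    omega
              · -- w'' = u ++ v'
                have hmv' : FreeGroup.mk v' = FreeGroup.mk [t'] := by
                  have : FreeGroup.mk (c :: (u ++ v')) =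
                      FreeGroup.mk [c] * (FreeGroup.mk u * FreeGroup.mk v') := by
                    rw [FreeGroup.mul_mk, FreeGroup.mul_mk]; rfl
                  rw [this, hu1, ← mul_assoc, mk_mul_letterInv, one_mul] at hbad
                  exact hbad
                refine hv2 v' hv' ?_ ?_ hmv'
                · rintro rfl
                  exact mk_single_ne_one t' hmv'.symm
                · rintro rfl
                  exact hnw rfl
    · -- backward direction
      rintro ⟨hmk, hcond⟩
      cases w with
      | nil =>
        exfalso
        exact mk_single_ne_one t (by rw [← hmk]; rfl)
      | cons c w2 =>
        by_cases hct : c = t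
        · subst hct
          by_cases h2 : w2 = []
          · subst h2
            refine Produces.single ⟨⟨some c, [Symbol.terminal c]⟩, ?_, ?_⟩
            · refine (mem_trivGrammar_rules _).mpr ((mem_trivRules_iff _).mpr ?_)
              exact Or.inr (Or.inr (Or.inl ⟨c, rfl⟩))
            · exact ContextFreeRule.Rewrites.input_output
          · exfalso
            exact hcond [c] ⟨w2, rfl⟩ (by simp)
              (by intro he; injection he with _ h; exact h2 h.symm) rfl
        · have hw2 : FreeGroup.mk w2 = FreeGroup.mk [letterInv c] * FreeGroup.mk [t] := by
            have hcw : FreeGroup.mk [c] * FreeGroup.mk w2 = FreeGroup.mk [t] := by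
              rw [FreeGroup.mul_mk]; exact hmk
            rw [mk_letterInv_eq_inv, eq_inv_mul_iff_mul_eq]
            exact hcw
          obtain ⟨r0, hr0pre, hr0ne, hr0mk⟩ := cross hct hw2
          classical
          have hex : ∃ k, FreeGroup.mk (w2.take k) = FreeGroup.mk [letterInv c] :=
            ⟨r0.length, by rw [← List.prefix_iff_eq_take.mp hr0pre]; exact hr0mk⟩
          set k := Nat.find hex with hk
          set u := w2.take k with hu
          set v := w2.drop k with hv
          have huv : u ++ v = w2 := List.take_append_drop k w2
          have hu1 : FreeGroup.mk u = FreeGroup.mk [letterInv c] := Nat.find_spec hex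
          have hv1 : FreeGroup.mk v = FreeGroup.mk [t] := by
            have : FreeGroup.mk u * FreeGroup.mk v = FreeGroup.mk w2 := by
              rw [FreeGroup.mul_mk, huv]
            rw [hu1, hw2] at this
            exact mul_left_cancel this
          have hu2 : ∀ w', w' <+: u → w' ≠ [] → w' ≠ u →
              FreeGroup.mk w' ≠ FreeGroup.mk [letterInv c] := by
            intro r' hpre h0 hne hbad
            have hr'w2 : r' <+: w2 := hpre.trans (List.take_prefix k w2)
            have hlt : r'.length < k := by
              have h1 : r'.length ≤ u.length := hpre.length_le
              have h2 : u.length ≤ k := by rw [hu]; simp [List.length_take]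
              rcases lt_or_eq_of_le h1 with h | h
              · omega
              · exact absurd (hpre.eq_of_length h) hne
            exact Nat.find_min hex hlt
              (by rw [← List.prefix_iff_eq_take.mp hr'w2]; exact hbad)
          have hv2 : ∀ w', w' <+: v → w' ≠ [] → w' ≠ v →
              FreeGroup.mk w' ≠ FreeGroup.mk [t] := by
            intro v' hpre h0 hne hbad
            refine hcond (c :: (u ++ v')) ?_ (by simp) ?_ ?_
            · rw [show (c :: w2 : List (Fin n × Bool)) = c :: (u ++ v) from by rw [huv]]
              exact List.cons_prefix_cons.mpr ⟨rfl, prefix_append_left' u hpre⟩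
            · intro he
              have hle := congrArg List.length he
              have h1 : v'.length < v.length :=
                lt_of_le_of_ne hpre.length_le (fun hl => hne (hpre.eq_of_length hl))
              have h2 : w2.length = u.length + v.length := by rw [← huv]; simp
              simp only [List.length_cons, List.length_append] at hle
              omega
            · have : FreeGroup.mk (c :: (u ++ v')) =
                  FreeGroup.mk [c] * (FreeGroup.mk u * FreeGroup.mk v') := by
                rw [FreeGroup.mul_mk, FreeGroup.mul_mk]; rfl
              rw [this, hu1, ← mul_assoc, mk_mul_letterInv, one_mul]
              exact hbad
          have hlu : u.length < N := by
            have h1 : u.length ≤ w2.length := by rw [hu]; simp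
            simp only [List.length_cons] at hw
            omega
          have hlv : v.length < N := by
            have h1 : v.length ≤ w2.length := by rw [hv]; simp
            simp only [List.length_cons] at hw
            omega
          have Du := (ih u hlu (letterInv c)).mpr ⟨hu1, hu2⟩
          have Dv := (ih v hlv t).mpr ⟨hv1, hv2⟩
          have step : (trivGrammar n).Produces [Symbol.nonterminal (some t)]
              [Symbol.terminal c, Symbol.nonterminal (some (letterInv c)),
                Symbol.nonterminal (some t)] := by
            refine ⟨⟨some t, [Symbol.terminal c, Symbol.nonterminal (some (letterInv c)),
              Symbol.nonterminal (some t)]⟩, ?_, ?_⟩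
            · refine (mem_trivGrammar_rules _).mpr ((mem_trivRules_iff _).mpr ?_)
              exact Or.inr (Or.inr (Or.inr ⟨t, c, hct, rfl⟩))
            · exact ContextFreeRule.Rewrites.input_output
          have Db : (trivGrammar n).Derives
              ([Symbol.terminal c] ++ ([Symbol.nonterminal (some (letterInv c))] ++
                [Symbol.nonterminal (some t)]))
              ([Symbol.terminal c] ++ (u.map Symbol.terminal ++
                [Symbol.nonterminal (some t)])) :=
            (Du.append_right [Symbol.nonterminal (some t)]).append_left [Symbol.terminal c]
          have Dc : (trivGrammar n).Derives
              ((Symbol.terminal c :: u.map Symbol.terminal) ++ [Symbol.nonterminal (some t)])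
              ((Symbol.terminal c :: u.map Symbol.terminal) ++ v.map Symbol.terminal) :=
            Dv.append_left _
          have hfin : ((c :: w2).map Symbol.terminal : List (Symbol (Fin n × Bool) (TrivNT n))) =
              (Symbol.terminal c :: u.map Symbol.terminal) ++ v.map Symbol.terminal := by
            rw [← huv]; simp
          rw [show ((c :: w2).map Symbol.terminal : List (Symbol (Fin n × Bool) (trivGrammar n).NT)) = _ from hfin]
          exact step.trans_derives (Derives.trans Db Dc)

/-- In the grammar above, the nonterminal `A_i` (encoded `some (i, true)`) derives a word
`w` if and only if `w` evaluates to `aᵢ` in the free group `Fₙ` and no proper nonempty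
initial segment of `w` evaluates to `aᵢ`. -/
theorem stmt9 (n : ℕ) (i : Fin n) (w : List (Fin n × Bool)) :
    (trivGrammar n).Derives
        [Symbol.nonterminal (some (i, true) : TrivNT n)] (w.map Symbol.terminal) ↔
      (FreeGroup.mk w = FreeGroup.of i ∧
        ∀ w' : List (Fin n × Bool), w' <+: w → w' ≠ [] → w' ≠ w →
          FreeGroup.mk w' ≠ FreeGroup.of i) := by
  have hof : FreeGroup.of i = FreeGroup.mk [((i : Fin n), true)] := rfl
  rw [hof]
  exact key n (w.length + 1) w (by omega) (i, true)
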